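/- For every m ≥ 2 and every surjective colouring Δ : ℕ^(2) → [m], F_Δ has at least ⌊√(2m)⌋ elements. -/

import Mathlib

/-- The set of colours appearing on edges inside `X` under the edge-colouring `Δ`
of the complete graph on `ℕ`. -/
def colorsOn {C : Type*} (Δ : ℕ → ℕ → C) (X : Set ℕ) : Set C :=
  {c | ∃ x ∈ X, ∃ y ∈ X, x ≠ y ∧ Δ x y = c}

/-- `F_Δ`: the set of values `γ(X)` (number of colours inside `X`)
over infinite `X ⊆ ℕ`. -/
def FDelta {C : Type*} (Δ : ℕ → ℕ → C) : Set ℕ :=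
  {k | ∃ X : Set ℕ, X.Infinite ∧ (colorsOn Δ X).ncard = k}

open Filter in
lemma ultra_pigeon {α : Type*} {m : ℕ} (U : Ultrafilter α) (f : α → Fin m) :
    ∃ c, {x | f x = c} ∈ U := by
  by_contra h
  push_neg at h
  have h2 : ∀ c, {x | f x ≠ c} ∈ U := by
    intro c
    exact Ultrafilter.compl_mem_iff_notMem.mpr (h c)
  have h3 : (⋂ c, {x | f x ≠ c}) ∈ U := Filter.iInter_mem.mpr h2
  obtain ⟨x, hx⟩ := Filter.nonempty_of_mem h3
  simp only [Set.mem_iInter, Set.mem_setOf_eq] at hx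
  exact hx (f x) rfl

open Filter in
lemma exists_mono_subset {m : ℕ} (Δ : ℕ → ℕ → Fin m) (hsym : ∀ x y, Δ x y = Δ y x)
    {X : Set ℕ} (hX : X.Infinite) :
    ∃ Y : Set ℕ, Y ⊆ X ∧ Y.Infinite ∧ ∃ c, colorsOn Δ Y = {c} := by
  haveI : Infinite ↥X := Set.infinite_coe_iff.mpr hX
  set U := hyperfilter ↥X with hU
  have hκ : ∀ x : ↥X, ∃ c, {y : ↥X | Δ x y = c} ∈ U := fun x => ultra_pigeon U _
  choose κ hκ using hκ
  obtain ⟨c, hc⟩ := ultra_pigeon U κ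
  have key : ∀ s : Finset ↥X, (∀ x ∈ s, κ x = c) →
      ∃ y, κ y = c ∧ ∀ x ∈ s, Δ ↑x ↑y = c ∧ y ≠ x := by
    intro s hs
    have hT : ({x | κ x = c} ∩ ⋂ x ∈ s, ({y : ↥X | Δ ↑x ↑y = c} ∩ {y | y ≠ x})) ∈ U := by
      refine Filter.inter_mem hc ?_
      refine (Filter.biInter_mem s.finite_toSet).mpr ?_
      intro x hx
      refine Filter.inter_mem ?_ ?_
      · have := hκ x; rw [hs x hx] at this; exact this
      · exact mem_hyperfilter_of_finite_compl (by simp)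
    obtain ⟨y, hy1, hy2⟩ := Filter.nonempty_of_mem hT
    simp only [Set.mem_iInter, Set.mem_inter_iff, Set.mem_setOf_eq] at hy2
    exact ⟨y, hy1, fun x hx => ⟨(hy2 x hx).1, (hy2 x hx).2⟩⟩
  obtain ⟨f, hfP, hfr⟩ := exists_seq_of_forall_finset_exists (fun x : ↥X => κ x = c)
    (fun x y => Δ ↑x ↑y = c ∧ y ≠ x) (by
      intro s hs
      obtain ⟨y, h1, h2⟩ := key s hs
      exact ⟨y, h1, h2⟩)
  have hinj : Function.Injective f := by
    intro i j hij
    rcases lt_trichotomy i j with h | h | h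
    · exact absurd hij.symm (hfr i j h).2
    · exact h ▸ rfl
    · exact absurd hij (hfr j i h).2
  refine ⟨Subtype.val '' Set.range f, by rintro y ⟨x, _, rfl⟩; exact x.2,
    ((Set.infinite_range_of_injective hinj).image (Subtype.val_injective.injOn)), c, ?_⟩
  apply Set.eq_singleton_iff_unique_mem.mpr
  constructor
  · refine ⟨↑(f 0), ⟨f 0, ⟨0, rfl⟩, rfl⟩, ↑(f 1), ⟨f 1, ⟨1, rfl⟩, rfl⟩, ?_, (hfr 0 1 one_pos).1⟩
    exact fun h => (hfr 0 1 one_pos).2 (Subtype.val_injective h).symm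
  · rintro d ⟨x, ⟨x', ⟨i, rfl⟩, rfl⟩, y, ⟨y', ⟨j, rfl⟩, rfl⟩, hne, rfl⟩
    have hij : i ≠ j := by rintro rfl; exact hne rfl
    rcases hij.lt_or_gt with h | h
    · exact (hfr i j h).1
    · exact (hsym _ _).trans (hfr j i h).1

section Basics
variable {m : ℕ} (Δ : ℕ → ℕ → Fin m)

lemma colorsOn_mono {X Y : Set ℕ} (h : X ⊆ Y) : colorsOn Δ X ⊆ colorsOn Δ Y := by
  rintro c ⟨x, hx, y, hy, hxy, rfl⟩
  exact ⟨x, h hx, y, h hy, hxy, rfl⟩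

lemma colorsOn_nonempty {X : Set ℕ} (hX : X.Infinite) : (colorsOn Δ X).Nonempty := by
  obtain ⟨x, hx⟩ := hX.nonempty
  obtain ⟨y, hy⟩ := (hX.diff (Set.finite_singleton x)).nonempty
  exact ⟨Δ x y, x, hx, y, hy.1, fun h => hy.2 (h ▸ rfl), rfl⟩

lemma gamma_le (X : Set ℕ) : (colorsOn Δ X).ncard ≤ m := by
  calc (colorsOn Δ X).ncard ≤ (Set.univ : Set (Fin m)).ncard :=
        Set.ncard_le_ncard (Set.subset_univ _) (Set.toFinite _)
    _ = m := by simp [Set.ncard_univ]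

lemma one_le_gamma {X : Set ℕ} (hX : X.Infinite) : 1 ≤ (colorsOn Δ X).ncard :=
  (Set.ncard_pos (Set.toFinite _)).mpr (colorsOn_nonempty Δ hX)

lemma exists_mono_subset' (hsym : ∀ x y, Δ x y = Δ y x) {X : Set ℕ} (hX : X.Infinite) :
    ∃ Y : Set ℕ, Y ⊆ X ∧ Y.Infinite ∧ (colorsOn Δ Y).ncard = 1 := by
  obtain ⟨Y, hYX, hYinf, c, hc⟩ := exists_mono_subset Δ hsym hX
  exact ⟨Y, hYX, hYinf, by rw [hc, Set.ncard_singleton]⟩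

lemma gap (hsym : ∀ x y, Δ x y = Δ y x) {X : Set ℕ} (hX : X.Infinite) {k : ℕ}
    (hk : (colorsOn Δ X).ncard = k) (h2 : 2 ≤ k) :
    ∃ k' ∈ FDelta Δ, k' < k ∧ k ≤ k' + (FDelta Δ ∩ Set.Icc 2 k).ncard := by
  classical
  -- the maximal value below k achievable inside X
  set V : Set ℕ := {n | n < k ∧ ∃ Y, Y ⊆ X ∧ Y.Infinite ∧ (colorsOn Δ Y).ncard = n} with hV
  have hVne : 1 ∈ V := by
    obtain ⟨Y, hYX, hYinf, hY1⟩ := exists_mono_subset' Δ hsym hX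
    exact ⟨by omega, Y, hYX, hYinf, hY1⟩
  have hVbdd : BddAbove V := ⟨k, fun n hn => hn.1.le⟩
  set k' := sSup V with hk'def
  obtain ⟨hk'k, Y, hYX, hYinf, hYcard⟩ : k' ∈ V := Nat.sSup_mem ⟨1, hVne⟩ hVbdd
  have hmax : ∀ Z, Z ⊆ X → Z.Infinite → (colorsOn Δ Z).ncard < k →
      (colorsOn Δ Z).ncard ≤ k' := fun Z h1 h2 h3 => le_csSup hVbdd ⟨h3, Z, h1, h2, rfl⟩
  have hk'F : k' ∈ FDelta Δ := ⟨Y, hYinf, hYcard⟩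
  have hkF : k ∈ FDelta Δ := ⟨X, hX, hk⟩
  have hficc : ∀ x : ℕ, (FDelta Δ ∩ Set.Icc 2 x).Finite :=
    fun x => (Set.finite_Icc 2 x).subset Set.inter_subset_right
  have hkmem : k ∈ FDelta Δ ∩ Set.Icc 2 k := ⟨hkF, h2, le_refl k⟩
  -- dichotomy
  have dich : ∀ Z, Y ⊆ Z → Z ⊆ X → colorsOn Δ Z = colorsOn Δ Y ∨ colorsOn Δ Z = colorsOn Δ X := by
    intro Z hYZ hZX
    by_cases hlt : (colorsOn Δ Z).ncard < k
    · left
      have h1 := hmax Z hZX (hYinf.mono hYZ) hlt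
      have h2 : colorsOn Δ Y ⊆ colorsOn Δ Z := colorsOn_mono Δ hYZ
      exact (Set.eq_of_subset_of_ncard_le h2 (h1.trans_eq hYcard.symm) (Set.toFinite _)).symm
    · right
      exact Set.eq_of_subset_of_ncard_le (colorsOn_mono Δ hZX) (hk ▸ not_lt.mp hlt)
        (Set.toFinite _)
  -- existence of a finite recovering set
  have hex : ∃ n, ∃ S : Finset ℕ, ↑S ⊆ X ∧ S.card = n ∧
      colorsOn Δ (Y ∪ ↑S) = colorsOn Δ X := by
    have hch : ∀ c ∈ colorsOn Δ X, ∃ p : ℕ × ℕ,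
        p.1 ∈ X ∧ p.2 ∈ X ∧ p.1 ≠ p.2 ∧ Δ p.1 p.2 = c := by
      rintro c ⟨x, hx, y, hy, hxy, rfl⟩; exact ⟨(x, y), hx, hy, hxy, rfl⟩
    choose! w hw1 hw2 hw3 hw4 using hch
    refine ⟨_, ((colorsOn Δ X).toFinite.toFinset.biUnion
      (fun c => {(w c).1, (w c).2})), ?_, rfl, ?_⟩
    · intro x hx
      simp only [Finset.coe_biUnion, Set.mem_iUnion, Finset.coe_insert, Finset.mem_coe,
        Set.Finite.mem_toFinset, Finset.coe_singleton, Set.mem_insert_iff,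
        Set.mem_singleton_iff] at hx
      obtain ⟨c, hc, h⟩ := hx
      rcases h with h | h
      · exact h ▸ hw1 c hc
      · exact h ▸ hw2 c hc
    · apply Set.Subset.antisymm
      · apply colorsOn_mono
        apply Set.union_subset hYX
        intro x hx
        simp only [Finset.coe_biUnion, Set.mem_iUnion, Finset.mem_coe,
          Set.Finite.mem_toFinset] at hx
        obtain ⟨c, hc, h⟩ := hx
        simp only [Finset.mem_insert, Finset.mem_singleton] at h
        rcases h with h | h
        · exact h ▸ hw1 c hc
        · exact h ▸ hw2 c hc
      · intro c hc
        refine ⟨(w c).1, ?_, (w c).2, ?_, hw3 c hc, hw4 c hc⟩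
        · refine Set.mem_union_right _ ?_
          simp only [Finset.coe_biUnion, Set.mem_iUnion, Finset.mem_coe,
            Set.Finite.mem_toFinset]
          exact ⟨c, hc, by simp⟩
        · refine Set.mem_union_right _ ?_
          simp only [Finset.coe_biUnion, Set.mem_iUnion, Finset.mem_coe,
            Set.Finite.mem_toFinset]
          exact ⟨c, hc, by simp⟩
  -- minimal such set
  obtain ⟨S, hSX, hScard, hScol⟩ := Nat.find_spec hex
  have hmin : ∀ S' : Finset ℕ, ↑S' ⊆ X → colorsOn Δ (Y ∪ ↑S') = colorsOn Δ X →
      Nat.find hex ≤ S'.card := fun S' h1 h2 => Nat.find_min' hex ⟨S', h1, rfl, h2⟩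
  have hYneX : colorsOn Δ Y ≠ colorsOn Δ X := by
    intro h
    rw [← hYcard, h, hk] at hk'k
    exact lt_irrefl _ hk'k
  -- lost colours
  set L : Set (Fin m) := colorsOn Δ X \ colorsOn Δ Y with hLdef
  have hLcard : (colorsOn Δ Y).ncard + L.ncard = k := by
    rw [← hk, ← Set.ncard_diff_add_ncard_of_subset (colorsOn_mono Δ hYX) (Set.toFinite _),
      ← hLdef]
    omega
  have hLne : L.Nonempty := by
    rw [hLdef, Set.diff_nonempty]
    exact fun hsub => hYneX (Set.Subset.antisymm (colorsOn_mono Δ hYX) hsub)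
  -- every lost edge contains all of S
  have hcontain : ∀ x y : ℕ, x ∈ Y ∪ ↑S → y ∈ Y ∪ ↑S → x ≠ y → Δ x y ∈ L →
      ↑S ⊆ ({x, y} : Set ℕ) := by
    intro x y hx hy hxy hL
    set S' : Finset ℕ := S ∩ {x, y} with hS'def
    have hS'S : S' ⊆ S := Finset.inter_subset_left
    have hS'X : ↑S' ⊆ X := fun z hz => hSX (hS'S hz)
    have hedge : x ∈ Y ∪ ↑S' ∧ y ∈ Y ∪ ↑S' := by
      constructor
      · rcases hx with hx | hx
        · exact Or.inl hx
        · exact Or.inr (Finset.mem_coe.mpr (Finset.mem_inter.mpr ⟨hx, by simp⟩))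
      · rcases hy with hy | hy
        · exact Or.inl hy
        · exact Or.inr (Finset.mem_coe.mpr (Finset.mem_inter.mpr ⟨hy, by simp⟩))
    have hcol : Δ x y ∈ colorsOn Δ (Y ∪ ↑S') := ⟨x, hedge.1, y, hedge.2, hxy, rfl⟩
    rcases dich (Y ∪ ↑S') Set.subset_union_left (Set.union_subset hYX hS'X) with h | h
    · rw [h] at hcol
      exact absurd hcol hL.2
    · have : Nat.find hex ≤ S'.card := hmin S' hS'X h
      have hSeq : S' = S := Finset.eq_of_subset_of_card_le hS'S (hScard ▸ this)
      rw [← hSeq, hS'def]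
      intro z hz
      have := (Finset.mem_inter.mp hz).2
      simpa using this
  -- S is nonempty and small
  have hSne : S.Nonempty := by
    rcases Finset.eq_empty_or_nonempty S with h | h
    · exfalso
      apply hYneX
      rw [← hScol, h]
      simp
    · exact h
  obtain ⟨c₀, hc₀⟩ := hLne
  obtain ⟨x₀, hx₀, y₀, hy₀, hxy₀, hΔ₀⟩ : c₀ ∈ colorsOn Δ (Y ∪ ↑S) := hScol ▸ hc₀.1
  have hcont₀ : ↑S ⊆ ({x₀, y₀} : Set ℕ) := hcontain x₀ y₀ hx₀ hy₀ hxy₀ (hΔ₀ ▸ hc₀)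
  have hScard2 : S.card ≤ 2 := by
    have : S ⊆ ({x₀, y₀} : Finset ℕ) := by
      intro z hz
      have := hcont₀ hz
      simp only [Set.mem_insert_iff, Set.mem_singleton_iff] at this
      simpa using this
    calc S.card ≤ ({x₀, y₀} : Finset ℕ).card := Finset.card_le_card this
      _ ≤ 2 := Finset.card_insert_le _ _ |>.trans (by simp)
  have hd : k = k' + L.ncard := by omega
  interval_cases h : S.card
  · exact absurd (Finset.card_eq_zero.mp h ▸ hSne) (by simp)
  · -- case |S| = 1
    obtain ⟨u, hSu⟩ := Finset.card_eq_one.mp h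
    have huX : u ∈ X := hSX (by rw [hSu]; simp)
    have huY : u ∉ Y := by
      intro hu
      apply hYneX
      rw [← hScol, hSu]
      simp only [Finset.coe_singleton]
      exact congrArg (colorsOn Δ) (Set.union_eq_left.mpr (Set.singleton_subset_iff.mpr hu)).symm
    have hw : ∀ c ∈ L, ∃ y, y ∈ Y ∧ y ≠ u ∧ Δ u y = c := by
      intro c hc
      obtain ⟨x, hx, y, hy, hxy, hΔ⟩ : c ∈ colorsOn Δ (Y ∪ ↑S) := hScol ▸ hc.1
      rw [hSu] at hx hy
      simp only [Finset.coe_singleton, Set.union_singleton, Set.mem_insert_iff] at hx hy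
      rcases hx with hxu | hx <;> rcases hy with hyu | hy
      · exact absurd (hxu.trans hyu.symm) hxy
      · exact ⟨y, hy, fun h => huY (h ▸ hy), by rw [← hxu]; exact hΔ⟩
      · exact ⟨x, hx, fun h => huY (h ▸ hx), by rw [hsym, ← hyu]; exact hΔ⟩
      · exact absurd (⟨x, hx, y, hy, hxy, hΔ⟩ : c ∈ colorsOn Δ Y) hc.2
    choose! w hwY hwu hwΔ using hw
    -- pigeonhole on the colours at u
    obtain ⟨a, hY₀inf⟩ : ∃ a, {y | y ∈ Y ∧ Δ u y = a}.Infinite := by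
      by_contra hcon
      push_neg at hcon
      apply hYinf
      have : Y ⊆ ⋃ a, {y | y ∈ Y ∧ Δ u y = a} := fun y hy =>
        Set.mem_iUnion.mpr ⟨Δ u y, hy, rfl⟩
      exact (Set.finite_iUnion fun a => (hcon a)).subset this
    set Y₀ : Set ℕ := {y | y ∈ Y ∧ Δ u y = a} with hY₀def
    have hY₀Y : Y₀ ⊆ Y := fun y hy => hy.1
    -- finset versions of L
    set LF : Finset (Fin m) := L.toFinite.toFinset with hLFdef
    have hLFmem : ∀ c, c ∈ LF ↔ c ∈ L := fun c => Set.Finite.mem_toFinset _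
    set AF : Finset (Fin m) := LF ∩ {a} with hAFdef
    set L' : Finset (Fin m) := LF \ {a} with hL'def
    have hAL' : AF ∪ L' = LF := by
      ext x
      simp only [hAFdef, hL'def, Finset.mem_union, Finset.mem_inter, Finset.mem_sdiff,
        Finset.mem_singleton]
      tauto
    -- the chain sets
    set B : Finset (Fin m) → Set ℕ := fun T => Y₀ ∪ {u} ∪ (w '' ↑T) with hBdef
    have huBT : ∀ T, u ∈ B T := fun T => Or.inl (Or.inr rfl)
    have hBsub : ∀ T : Finset (Fin m), ↑T ⊆ L → B T ⊆ X := by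
      rintro T hT z ((hz | hz) | ⟨c, hc, rfl⟩)
      · exact hYX (hY₀Y hz)
      · exact hz ▸ huX
      · exact hYX (hwY c (hT hc))
    have hBinf : ∀ T, (B T).Infinite := fun T =>
      hY₀inf.mono (fun y hy => Or.inl (Or.inl hy))
    have hBcol_sub : ∀ T : Finset (Fin m), ↑T ⊆ L →
        colorsOn Δ (B T) ⊆ (colorsOn Δ Y ∪ ↑T) ∪ {a} := by
      rintro T hT c ⟨x, hx, y, hy, hxy, rfl⟩
      rcases hx with (hx | hx) | ⟨cx, hcx, rfl⟩ <;> rcases hy with (hy | hy) | ⟨cy, hcy, rfl⟩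
      · exact Or.inl (Or.inl ⟨x, hY₀Y hx, y, hY₀Y hy, hxy, rfl⟩)
      · refine Or.inr ?_
        simp only [Set.mem_singleton_iff] at hy ⊢
        rw [hy, hsym x u, hx.2]
      · exact Or.inl (Or.inl ⟨x, hY₀Y hx, w cy, hwY cy (hT hcy), hxy, rfl⟩)
      · refine Or.inr ?_
        simp only [Set.mem_singleton_iff] at hx ⊢
        rw [hx, hy.2]
      · simp only [Set.mem_singleton_iff] at hx hy
        exact absurd (hx.trans hy.symm) hxy
      · refine Or.inl (Or.inr ?_)
        simp only [Set.mem_singleton_iff] at hx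
        rw [hx, hwΔ cy (hT hcy)]
        exact hcy
      · exact Or.inl (Or.inl ⟨w cx, hwY cx (hT hcx), y, hY₀Y hy, hxy, rfl⟩)
      · refine Or.inl (Or.inr ?_)
        simp only [Set.mem_singleton_iff] at hy
        rw [hy, hsym _ u, hwΔ cx (hT hcx)]
        exact hcx
      · exact Or.inl (Or.inl ⟨w cx, hwY cx (hT hcx), w cy, hwY cy (hT hcy), hxy, rfl⟩)
    have hBcol_T : ∀ T : Finset (Fin m), ↑T ⊆ L → ∀ c ∈ T, (c : Fin m) ∈ colorsOn Δ (B T) := by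
      intro T hT c hc
      exact ⟨u, huBT T, w c, Or.inr ⟨c, hc, rfl⟩,
        fun h => hwu c (hT hc) h.symm, hwΔ c (hT hc)⟩
    have hBcol_a : ∀ T, a ∈ colorsOn Δ (B T) := by
      intro T
      obtain ⟨y, hy⟩ := hY₀inf.nonempty
      exact ⟨u, huBT T, y, Or.inl (Or.inl hy), fun h => huY (h ▸ hy.1), hy.2⟩
    have hY₀ne : (colorsOn Δ Y₀).Nonempty := colorsOn_nonempty Δ hY₀inf
    have hY₀notL : ∀ b ∈ colorsOn Δ Y₀, b ∉ L := fun b hb hbL =>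
      hbL.2 (colorsOn_mono Δ hY₀Y hb)
    have h2le : ∀ T : Finset (Fin m), (∃ c ∈ L, c ∈ colorsOn Δ (B T)) →
        2 ≤ (colorsOn Δ (B T)).ncard := by
      rintro T ⟨c, hcL, hcB⟩
      obtain ⟨b, hb⟩ := hY₀ne
      have hbB : b ∈ colorsOn Δ (B T) :=
        colorsOn_mono Δ (fun y hy => Or.inl (Or.inl hy)) hb
      have : 1 < (colorsOn Δ (B T)).ncard := by
        rw [Set.one_lt_ncard (Set.toFinite _)]
        exact ⟨b, hbB, c, hcB, fun hbc => hY₀notL b hb (hbc ▸ hcL)⟩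
      omega
    have hstrict : ∀ (T : Finset (Fin m)) (c : Fin m), ↑T ⊆ L → c ∈ L → c ∉ T → c ≠ a →
        c ∉ colorsOn Δ (B T) := by
      intro T c hT hcL hcT hca hmem
      rcases hBcol_sub T hT hmem with (h | h) | h
      · exact hcL.2 h
      · exact hcT h
      · exact hca h
    -- the induction
    have claim : ∀ T : Finset (Fin m), T ⊆ L' → (AF ∪ T).Nonempty →
        (AF ∪ T).card ≤
          (FDelta Δ ∩ Set.Icc 2 ((colorsOn Δ (B (AF ∪ T))).ncard)).ncard := by
      intro T
      induction T using Finset.induction_on with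
      | empty =>
        intro _ hne
        rw [Finset.union_empty] at hne ⊢
        obtain ⟨x, hx⟩ := hne
        have hxa : x = a := Finset.mem_singleton.mp (Finset.mem_inter.mp hx).2
        have haL : a ∈ L := (hLFmem a).mp (hxa ▸ (Finset.mem_inter.mp hx).1)
        have hAFa : AF = {a} := Finset.Subset.antisymm Finset.inter_subset_right
          (Finset.singleton_subset_iff.mpr
            (Finset.mem_inter.mpr ⟨(hLFmem a).mpr haL, Finset.mem_singleton_self a⟩))
        rw [hAFa]
        have hmem : (colorsOn Δ (B {a})).ncard ∈
            FDelta Δ ∩ Set.Icc 2 ((colorsOn Δ (B {a})).ncard) := by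
          refine ⟨⟨B {a}, hBinf _, rfl⟩, ?_, le_refl _⟩
          exact h2le {a} ⟨a, haL, hBcol_a _⟩
        exact (Set.ncard_pos (hficc _)).mpr ⟨_, hmem⟩
      | @insert c T₀ hcT₀ ih =>
        intro hsub hne
        have hcL' : c ∈ L' := hsub (Finset.mem_insert_self c T₀)
        have hcL : c ∈ L := (hLFmem c).mp (Finset.mem_sdiff.mp hcL').1
        have hca : c ≠ a := by
          have := (Finset.mem_sdiff.mp hcL').2
          simpa using this
        have hT₀ : T₀ ⊆ L' := fun x hx => hsub (Finset.mem_insert_of_mem hx)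
        have hT₂eq : AF ∪ insert c T₀ = insert c (AF ∪ T₀) := Finset.union_insert c AF T₀
        have hcT₁ : c ∉ AF ∪ T₀ := by
          intro hc
          rcases Finset.mem_union.mp hc with hc | hc
          · exact hca (Finset.mem_singleton.mp (Finset.mem_inter.mp hc).2)
          · exact hcT₀ hc
        have hT₁L : ↑(AF ∪ T₀) ⊆ L := by
          intro x hx
          rcases Finset.mem_union.mp hx with hx | hx
          · exact (hLFmem x).mp (Finset.mem_inter.mp hx).1
          · exact (hLFmem x).mp (Finset.mem_sdiff.mp (hT₀ hx)).1
        have hT₂L : ↑(AF ∪ insert c T₀) ⊆ L := by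
          rw [hT₂eq]
          intro x hx
          rcases Finset.mem_insert.mp (Finset.mem_coe.mp hx) with rfl | hx
          · exact hcL
          · exact hT₁L hx
        have hsub12 : colorsOn Δ (B (AF ∪ T₀)) ⊆ colorsOn Δ (B (AF ∪ insert c T₀)) := by
          apply colorsOn_mono
          apply Set.union_subset_union Set.Subset.rfl
          apply Set.image_mono
          intro x hx
          rw [hT₂eq]
          exact Finset.mem_insert_of_mem hx
        have hc2 : c ∈ colorsOn Δ (B (AF ∪ insert c T₀)) :=
          hBcol_T _ hT₂L c (by rw [hT₂eq]; exact Finset.mem_insert_self c _)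
        have hc1 : c ∉ colorsOn Δ (B (AF ∪ T₀)) := hstrict _ c hT₁L hcL hcT₁ hca
        have hg12 : (colorsOn Δ (B (AF ∪ T₀))).ncard <
            (colorsOn Δ (B (AF ∪ insert c T₀))).ncard := by
          apply Set.ncard_lt_ncard _ (Set.toFinite _)
          exact ⟨hsub12, fun hcon => hc1 (hcon hc2)⟩
        have hg₂F : (colorsOn Δ (B (AF ∪ insert c T₀))).ncard ∈ FDelta Δ :=
          ⟨B (AF ∪ insert c T₀), hBinf _, rfl⟩
        have hg₂2 : 2 ≤ (colorsOn Δ (B (AF ∪ insert c T₀))).ncard :=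
          h2le _ ⟨c, hcL, hc2⟩
        by_cases hT₁ne : (AF ∪ T₀).Nonempty
        · have hIH := ih hT₀ hT₁ne
          have hins : insert ((colorsOn Δ (B (AF ∪ insert c T₀))).ncard)
              (FDelta Δ ∩ Set.Icc 2 ((colorsOn Δ (B (AF ∪ T₀))).ncard)) ⊆
              FDelta Δ ∩ Set.Icc 2 ((colorsOn Δ (B (AF ∪ insert c T₀))).ncard) := by
            rintro x (rfl | ⟨hx1, hx2, hx3⟩)
            · exact ⟨hg₂F, hg₂2, le_refl _⟩
            · exact ⟨hx1, hx2, hx3.trans hg12.le⟩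
          have hnm : (colorsOn Δ (B (AF ∪ insert c T₀))).ncard ∉
              FDelta Δ ∩ Set.Icc 2 ((colorsOn Δ (B (AF ∪ T₀))).ncard) :=
            fun hcon => absurd hcon.2.2 (not_le.mpr hg12)
          have hcount : (FDelta Δ ∩ Set.Icc 2 ((colorsOn Δ (B (AF ∪ T₀))).ncard)).ncard + 1 ≤
              (FDelta Δ ∩ Set.Icc 2 ((colorsOn Δ (B (AF ∪ insert c T₀))).ncard)).ncard := by
            rw [← Set.ncard_insert_of_notMem hnm (hficc _)]
            exact Set.ncard_le_ncard hins (hficc _)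
          have hcard2 : (AF ∪ insert c T₀).card = (AF ∪ T₀).card + 1 := by
            rw [hT₂eq, Finset.card_insert_of_notMem hcT₁]
          omega
        · have hT₁e : AF ∪ T₀ = ∅ := Finset.not_nonempty_iff_eq_empty.mp hT₁ne
          have hcard2 : (AF ∪ insert c T₀).card = 1 := by
            rw [hT₂eq, hT₁e]
            simp
          rw [hcard2]
          have hmem : (colorsOn Δ (B (AF ∪ insert c T₀))).ncard ∈
              FDelta Δ ∩ Set.Icc 2 ((colorsOn Δ (B (AF ∪ insert c T₀))).ncard) :=
            ⟨hg₂F, hg₂2, le_refl _⟩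
          exact (Set.ncard_pos (hficc _)).mpr ⟨_, hmem⟩
    -- conclude
    have hLFne : LF.Nonempty := ⟨c₀, (hLFmem c₀).mpr hc₀⟩
    have hLFcard : LF.card = L.ncard := (Set.ncard_eq_toFinset_card L (Set.toFinite L)).symm
    have hfin := claim L' (Finset.Subset.refl L') (by rw [hAL']; exact hLFne)
    rw [hAL'] at hfin
    have hgk : (colorsOn Δ (B LF)).ncard ≤ k := by
      rw [← hk]
      exact Set.ncard_le_ncard (colorsOn_mono Δ (hBsub LF (fun c hc => (hLFmem c).mp hc)))
        (Set.toFinite _)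
    have hmono2 : (FDelta Δ ∩ Set.Icc 2 ((colorsOn Δ (B LF)).ncard)).ncard ≤
        (FDelta Δ ∩ Set.Icc 2 k).ncard := by
      apply Set.ncard_le_ncard _ (hficc k)
      rintro x ⟨hx1, hx2, hx3⟩
      exact ⟨hx1, hx2, hx3.trans hgk⟩
    refine ⟨k', hk'F, hk'k, ?_⟩
    omega
  · -- case |S| = 2
    obtain ⟨u, v, huv, hSuv⟩ := Finset.card_eq_two.mp h
    have hLsub : L ⊆ {Δ u v} := by
      intro c hc
      obtain ⟨x, hx, y, hy, hxy, hΔ⟩ : c ∈ colorsOn Δ (Y ∪ ↑S) := hScol ▸ hc.1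
      have hcs : ↑S ⊆ ({x, y} : Set ℕ) := hcontain x y hx hy hxy (hΔ ▸ hc)
      have hu : u ∈ ({x, y} : Set ℕ) := hcs (by rw [hSuv]; simp)
      have hv : v ∈ ({x, y} : Set ℕ) := hcs (by rw [hSuv]; simp)
      simp only [Set.mem_insert_iff, Set.mem_singleton_iff] at hu hv
      rcases hu with rfl | rfl <;> rcases hv with rfl | rfl
      · exact absurd rfl huv
      · exact hΔ ▸ rfl
      · simp only [Set.mem_singleton_iff]
        rw [← hΔ, hsym]
      · exact absurd rfl huv
    have hd1 : L.ncard ≤ 1 := by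
      calc L.ncard ≤ ({Δ u v} : Set (Fin m)).ncard :=
            Set.ncard_le_ncard hLsub (Set.finite_singleton _)
        _ = 1 := Set.ncard_singleton _
    have : 1 ≤ (FDelta Δ ∩ Set.Icc 2 k).ncard :=
      (Set.ncard_pos (hficc k)).mpr ⟨k, hkmem⟩
    exact ⟨k', hk'F, hk'k, by omega⟩

lemma count_claim (hsym : ∀ x y, Δ x y = Δ y x) :
    ∀ k ∈ FDelta Δ, 2*k + (FDelta Δ ∩ Set.Icc 1 k).ncard ≤
      (FDelta Δ ∩ Set.Icc 1 k).ncard ^ 2 + 2 := by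
  have h1F : 1 ∈ FDelta Δ := by
    obtain ⟨Y, _, hYinf, hY1⟩ := exists_mono_subset' Δ hsym Set.infinite_univ
    exact ⟨Y, hYinf, hY1⟩
  have hficc : ∀ j x : ℕ, (FDelta Δ ∩ Set.Icc j x).Finite :=
    fun j x => (Set.finite_Icc j x).subset Set.inter_subset_right
  have hmem1 : ∀ k ∈ FDelta Δ, 1 ≤ k := by
    rintro k ⟨X, hX, rfl⟩
    exact one_le_gamma Δ hX
  have hsplit : ∀ k : ℕ, 1 ≤ k →
      (FDelta Δ ∩ Set.Icc 1 k).ncard = (FDelta Δ ∩ Set.Icc 2 k).ncard + 1 := by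
    intro k hk
    have he : FDelta Δ ∩ Set.Icc 1 k = insert 1 (FDelta Δ ∩ Set.Icc 2 k) := by
      ext x
      simp only [Set.mem_inter_iff, Set.mem_Icc, Set.mem_insert_iff]
      constructor
      · rintro ⟨h1, h2, h3⟩
        rcases Nat.lt_or_ge x 2 with h | h
        · left; omega
        · right; exact ⟨h1, h, h3⟩
      · rintro (rfl | ⟨h1, h2, h3⟩)
        · exact ⟨h1F, le_refl _, hk⟩
        · exact ⟨h1, by omega, h3⟩
    rw [he, Set.ncard_insert_of_notMem (by simp) (hficc 2 k)]
  intro k hkF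
  induction k using Nat.strong_induction_on with
  | _ k ih =>
    rcases Nat.lt_or_ge k 2 with hk2 | hk2
    · -- k = 1
      have hk1 : k = 1 := by have := hmem1 k hkF; omega
      subst hk1
      set t := (FDelta Δ ∩ Set.Icc 1 1).ncard with ht
      have ht1 : 1 ≤ t := (Set.ncard_pos (hficc 1 1)).mpr ⟨1, h1F, le_refl _, le_refl _⟩
      nlinarith [sq_nonneg t]
    · obtain ⟨X, hX, hkX⟩ := hkF
      obtain ⟨k', hk'F, hk'k, hineq⟩ := gap Δ hsym hX hkX hk2
      set t := (FDelta Δ ∩ Set.Icc 1 k).ncard with ht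
      set t' := (FDelta Δ ∩ Set.Icc 1 k').ncard with ht'
      have hk'1 : 1 ≤ k' := hmem1 k' hk'F
      have ht'1 : 1 ≤ t' := (Set.ncard_pos (hficc 1 k')).mpr ⟨k', hk'F, hk'1, le_refl _⟩
      have htt' : t' + 1 ≤ t := by
        have hinsert : insert k (FDelta Δ ∩ Set.Icc 1 k') ⊆ FDelta Δ ∩ Set.Icc 1 k := by
          rintro x (rfl | ⟨h1, h2, h3⟩)
          · exact ⟨⟨X, hX, hkX⟩, by omega, le_refl _⟩
          · exact ⟨h1, h2, h3.trans hk'k.le⟩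
        have hnm : k ∉ FDelta Δ ∩ Set.Icc 1 k' := fun hc => absurd hc.2.2 (by omega)
        calc t' + 1 = (insert k (FDelta Δ ∩ Set.Icc 1 k')).ncard :=
              (Set.ncard_insert_of_notMem hnm (hficc 1 k')).symm
          _ ≤ t := Set.ncard_le_ncard hinsert (hficc 1 k)
      have hIH := ih k' hk'k hk'F
      rw [← ht'] at hIH
      have hsum : k + 1 ≤ k' + t := by
        have := hsplit k (by omega)
        omega
      -- arithmetic
      zify at hIH hsum htt' ht'1 ⊢
      nlinarith [mul_nonneg (by linarith : (0:ℤ) ≤ (t:ℤ) - t' - 1)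
        (by linarith : (0:ℤ) ≤ (t':ℤ) - 1), sq_nonneg ((t:ℤ) - t' - 1)]

theorem stmt5' (hsym : ∀ x y, Δ x y = Δ y x)
    (hsurj : ∀ c : Fin m, ∃ x y : ℕ, x ≠ y ∧ Δ x y = c) :
    Nat.sqrt (2 * m) ≤ (FDelta Δ).ncard := by
  have hmF : m ∈ FDelta Δ := by
    refine ⟨Set.univ, Set.infinite_univ, ?_⟩
    have : colorsOn Δ Set.univ = Set.univ := by
      apply Set.eq_univ_iff_forall.mpr
      intro c
      obtain ⟨x, y, hxy, hΔ⟩ := hsurj c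
      exact ⟨x, trivial, y, trivial, hxy, hΔ⟩
    rw [this, Set.ncard_univ]
    simp
  have hFsub : FDelta Δ ⊆ Set.Icc 1 m := by
    rintro k ⟨X, hX, rfl⟩
    exact ⟨one_le_gamma Δ hX, gamma_le Δ X⟩
  have hFeq : FDelta Δ ∩ Set.Icc 1 m = FDelta Δ := Set.inter_eq_left.mpr hFsub
  have hclaim := count_claim Δ hsym m hmF
  rw [hFeq] at hclaim
  set r := (FDelta Δ).ncard with hr
  have hr1 : 1 ≤ r :=
    (Set.ncard_pos ((Set.finite_Icc 1 m).subset hFsub)).mpr ⟨m, hmF⟩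
  have h2m : 2 * m < (r + 1) * (r + 1) := by nlinarith
  have := Nat.sqrt_lt.mpr h2m
  omega

end Basics

/-- For every `m ≥ 2` and every surjective `m`-colouring `Δ` of `ℕ^(2)`,
`F_Δ` has at least `⌊√(2m)⌋` elements. -/
theorem stmt5 {m : ℕ} (hm : 2 ≤ m) (Δ : ℕ → ℕ → Fin m)
    (hsym : ∀ x y, Δ x y = Δ y x)
    (hsurj : ∀ c : Fin m, ∃ x y : ℕ, x ≠ y ∧ Δ x y = c) :
    Nat.sqrt (2 * m) ≤ (FDelta Δ).ncard :=
  stmt5' Δ hsym hsurj
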